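/- For every σ > 0 and μ ∈ ℝ there is exactly one ω ≥ 0 with g₁(ω) = 0; moreover this unique zero ω₁ satisfies ω₁ > |μ|. -/

import Mathlib

/-- `ω coth ω`, interpreted as `1` at `ω = 0`. -/
noncomputable def wcoth (ω : ℝ) : ℝ :=
  if ω = 0 then 1 else ω * Real.cosh ω / Real.sinh ω

/-- `ω / sinh ω`, interpreted as `1` at `ω = 0`. -/
noncomputable def wsinh (ω : ℝ) : ℝ :=
  if ω = 0 then 1 else ω / Real.sinh ω

/-- `g₁(ω) = ω² − 2σ·ω coth ω − 2σ·√(μ² + ω²/sinh²ω) − μ²`. -/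
noncomputable def gm (σ μ ω : ℝ) : ℝ :=
  ω^2 - 2*σ*wcoth ω - 2*σ*Real.sqrt (μ^2 + (wsinh ω)^2) - μ^2

/-- `g₀(ω) = ω² − 2σ·ω coth ω + 2σ·√(μ² + ω²/sinh²ω) − μ²`. -/
noncomputable def gp (σ μ ω : ℝ) : ℝ :=
  ω^2 - 2*σ*wcoth ω + 2*σ*Real.sqrt (μ^2 + (wsinh ω)^2) - μ^2

/-- `μ coth μ`, interpreted as `1` at `μ = 0`. -/
noncomputable def muCoth (μ : ℝ) : ℝ :=
  if μ = 0 then 1 else μ * Real.cosh μ / Real.sinh μ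

open Real Set

lemma sinh_lt_mul_cosh {x : ℝ} (hx : 0 < x) : Real.sinh x < x * Real.cosh x := by
  have hmono : StrictMonoOn (fun y : ℝ => y * Real.cosh y - Real.sinh y) (Ici 0) := by
    apply strictMonoOn_of_deriv_pos (convex_Ici 0)
    · fun_prop
    · intro y hy
      rw [interior_Ici] at hy
      have hd : HasDerivAt (fun y : ℝ => y * Real.cosh y - Real.sinh y) (y * Real.sinh y) y := by
        have := ((hasDerivAt_id y).mul (Real.hasDerivAt_cosh y)).sub (Real.hasDerivAt_sinh y)
        exact this.congr_deriv (by simp only [id]; ring)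
      rw [hd.deriv]
      exact mul_pos hy (Real.sinh_pos_iff.mpr hy)
  have := hmono (self_mem_Ici) (mem_Ici.mpr hx.le) hx
  simp at this
  linarith

lemma sinh_div_strictMono : StrictMonoOn (fun y : ℝ => Real.sinh y / y) (Ioi 0) := by
  apply strictMonoOn_of_deriv_pos (convex_Ioi 0)
  · apply ContinuousOn.div Real.continuous_sinh.continuousOn continuousOn_id
    intro y hy; exact ne_of_gt hy
  · intro y hy
    rw [interior_Ioi] at hy
    have hy0 : (y : ℝ) ≠ 0 := ne_of_gt hy
    have hd : HasDerivAt (fun y : ℝ => Real.sinh y / y)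
        ((Real.cosh y * y - Real.sinh y * 1) / y ^ 2) y :=
      (Real.hasDerivAt_sinh y).div (hasDerivAt_id y) hy0
    rw [hd.deriv]
    apply div_pos
    · have := sinh_lt_mul_cosh hy; nlinarith
    · positivity

lemma wsinh_pos {x : ℝ} (hx : 0 ≤ x) : 0 < wsinh x := by
  rcases eq_or_lt_of_le hx with h | h
  · simp [wsinh, ← h]
  · rw [wsinh, if_neg (ne_of_gt h)]
    exact div_pos h (Real.sinh_pos_iff.mpr h)

lemma wsinh_anti {a b : ℝ} (ha : 0 ≤ a) (hab : a < b) : wsinh b < wsinh a := by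
  have hb : 0 < b := lt_of_le_of_lt ha hab
  have hsb : 0 < Real.sinh b := Real.sinh_pos_iff.mpr hb
  rw [wsinh, if_neg (ne_of_gt hb)]
  rcases eq_or_lt_of_le ha with h | h
  · rw [← h]
    rw [show wsinh (0:ℝ) = 1 by simp [wsinh], div_lt_one hsb]
    exact Real.self_lt_sinh_iff.mpr hb
  · rw [wsinh, if_neg (ne_of_gt h)]
    have hsa : 0 < Real.sinh a := Real.sinh_pos_iff.mpr h
    rw [div_lt_div_iff₀ hsb hsa]
    have := sinh_div_strictMono (mem_Ioi.mpr h) (mem_Ioi.mpr hb) hab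
    simp only at this
    rw [div_lt_div_iff₀ h hb] at this
    nlinarith

lemma one_le_wcoth {x : ℝ} (hx : 0 ≤ x) : 1 ≤ wcoth x := by
  rcases eq_or_lt_of_le hx with h | h
  · simp [wcoth, ← h]
  · rw [wcoth, if_neg (ne_of_gt h)]
    have hs : 0 < Real.sinh x := Real.sinh_pos_iff.mpr h
    rw [le_div_iff₀ hs, one_mul]
    exact (sinh_lt_mul_cosh h).le

lemma wcoth_sq {x : ℝ} (hx : 0 ≤ x) : wcoth x ^ 2 = x ^ 2 + wsinh x ^ 2 := by
  rcases eq_or_lt_of_le hx with h | h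
  · simp [wcoth, wsinh, ← h]
  · rw [wcoth, wsinh, if_neg (ne_of_gt h), if_neg (ne_of_gt h)]
    have hs : Real.sinh x ≠ 0 := ne_of_gt (Real.sinh_pos_iff.mpr h)
    have := Real.cosh_sq_sub_sinh_sq x
    field_simp
    nlinarith

lemma gm_zero_char {σ μ ω : ℝ} (hσ : 0 < σ) (hω : 0 ≤ ω) (hz : gm σ μ ω = 0) :
    ω ^ 2 - 4 * σ * wcoth ω = μ ^ 2 - 4 * σ ^ 2 ∧ 2 * σ ≤ wcoth ω ∧ |μ| < ω := by
  set B := wcoth ω with hB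
  set W := wsinh ω with hW
  set C := Real.sqrt (μ ^ 2 + W ^ 2) with hCdef
  have hC0 : 0 ≤ C := Real.sqrt_nonneg _
  have hC2 : C ^ 2 = μ ^ 2 + W ^ 2 := Real.sq_sqrt (by positivity)
  have hBW : B ^ 2 = ω ^ 2 + W ^ 2 := wcoth_sq hω
  have hB1 : 1 ≤ B := one_le_wcoth hω
  have hgm : ω ^ 2 - 2 * σ * B - 2 * σ * C - μ ^ 2 = 0 := by
    have := hz; rw [gm] at this; linarith
  have hC : 2 * σ * C = ω ^ 2 - μ ^ 2 - 2 * σ * B := by linarith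
  have h2 : (ω ^ 2 - μ ^ 2 - 2 * σ * B) ^ 2 = 4 * σ ^ 2 * (μ ^ 2 + B ^ 2 - ω ^ 2) := by
    rw [← hC]
    have hW2 : W ^ 2 = B ^ 2 - ω ^ 2 := by linarith
    nlinarith [hC2, hW2]
  have hfac : (ω ^ 2 - μ ^ 2) * ((ω ^ 2 - μ ^ 2) - 4 * σ * B + 4 * σ ^ 2) = 0 := by
    linear_combination h2
  have hApos : 0 < ω ^ 2 - μ ^ 2 := by nlinarith
  have hfac2 : (ω ^ 2 - μ ^ 2) - 4 * σ * B + 4 * σ ^ 2 = 0 := by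
    rcases mul_eq_zero.mp hfac with h | h
    · exact absurd h (ne_of_gt hApos)
    · exact h
  refine ⟨by linarith, by nlinarith, ?_⟩
  have habs : |μ| ^ 2 < ω ^ 2 := by rw [sq_abs]; linarith
  nlinarith [abs_nonneg μ]

lemma gm_no_two_zeros {σ μ a b : ℝ} (hσ : 0 < σ) (ha : 0 ≤ a) (hab : a < b)
    (Ha : gm σ μ a = 0) (Hb : gm σ μ b = 0) : False := by
  have hb : 0 ≤ b := le_of_lt (lt_of_le_of_lt ha hab)
  obtain ⟨hψa, hBa, hμa⟩ := gm_zero_char hσ ha Ha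
  obtain ⟨hψb, hBb, hμb⟩ := gm_zero_char hσ hb Hb
  have ha0 : 0 < a := lt_of_le_of_lt (abs_nonneg μ) hμa
  have hWa : 0 < wsinh a := wsinh_pos ha
  have hWb : 0 < wsinh b := wsinh_pos hb
  have hWab : wsinh b < wsinh a := wsinh_anti ha hab
  have hsqa : wcoth a ^ 2 = a ^ 2 + wsinh a ^ 2 := wcoth_sq ha
  have hsqb : wcoth b ^ 2 = b ^ 2 + wsinh b ^ 2 := wcoth_sq hb
  -- b² - a² = 4σ(Bb - Ba) > 0, so Bb > Ba
  have hdiff : b ^ 2 - a ^ 2 = 4 * σ * (wcoth b - wcoth a) := by linarith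
  have hab2 : a ^ 2 < b ^ 2 := by nlinarith
  have hBab : wcoth a < wcoth b := by nlinarith
  -- 4σ(Bb-Ba) < (Ba+Bb)(Bb-Ba) = Bb² - Ba²
  have h1 : b ^ 2 - a ^ 2 < wcoth b ^ 2 - wcoth a ^ 2 := by nlinarith
  -- but Bb² - b² = Wb² < Wa² = Ba² - a²
  nlinarith

lemma gm_continuousOn {σ μ a b : ℝ} (ha : 0 < a) :
    ContinuousOn (gm σ μ) (Icc a b) := by
  have hs : ∀ x ∈ Icc a b, Real.sinh x ≠ 0 := fun x hx =>
    ne_of_gt (Real.sinh_pos_iff.mpr (lt_of_lt_of_le ha hx.1))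
  have hG : ContinuousOn (fun x : ℝ => x ^ 2 - 2 * σ * (x * Real.cosh x / Real.sinh x)
      - 2 * σ * Real.sqrt (μ ^ 2 + (x / Real.sinh x) ^ 2) - μ ^ 2) (Icc a b) := by
    apply ContinuousOn.sub
    apply ContinuousOn.sub
    apply ContinuousOn.sub
    · exact (continuous_pow 2).continuousOn
    · exact continuousOn_const.mul (((continuousOn_id.mul
        Real.continuous_cosh.continuousOn).div Real.continuous_sinh.continuousOn hs))
    · exact continuousOn_const.mul (Real.continuous_sqrt.comp_continuousOn
        (continuousOn_const.add ((continuousOn_id.div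
          Real.continuous_sinh.continuousOn hs).pow 2)))
    · exact continuousOn_const
  apply hG.congr
  intro x hx
  have hx0 : x ≠ 0 := ne_of_gt (lt_of_lt_of_le ha hx.1)
  simp only [gm, wcoth, wsinh, if_neg hx0]

/-- Lemma 2.1, first part: there is a unique `ω ≥ 0` with `g₁(ω) = 0`,
and this unique zero `ω₁` satisfies `ω₁ > |μ|`. -/
theorem stmt11 (σ μ : ℝ) (hσ : 0 < σ) :
    ∃ ω₁ : ℝ, (0 ≤ ω₁ ∧ gm σ μ ω₁ = 0 ∧ |μ| < ω₁) ∧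
      ∀ ω : ℝ, 0 ≤ ω → gm σ μ ω = 0 → ω = ω₁ := by
  -- lower IVT endpoint
  set a := Real.sqrt (μ ^ 2 + σ) with hadef
  have ha2 : a ^ 2 = μ ^ 2 + σ := Real.sq_sqrt (by positivity)
  have ha : 0 < a := Real.sqrt_pos.mpr (by positivity)
  have hga : gm σ μ a < 0 := by
    have h1 : 1 ≤ wcoth a := one_le_wcoth ha.le
    have h2 : 0 ≤ Real.sqrt (μ ^ 2 + wsinh a ^ 2) := Real.sqrt_nonneg _
    rw [gm]; nlinarith
  -- upper IVT endpoint
  set R := a + |μ| + μ ^ 2 + 4 * σ + 2 * σ * (|μ| + 1) + 1 with hRdef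
  have hμ0 : 0 ≤ |μ| := abs_nonneg μ
  have hR1 : 1 ≤ R := by nlinarith
  have hRa : a < R := by nlinarith
  have hR0 : 0 < R := by linarith
  have hsR : 0 < Real.sinh R := Real.sinh_pos_iff.mpr hR0
  have hsR1 : 1 < Real.sinh R := by
    calc (1:ℝ) < Real.sinh 1 := Real.self_lt_sinh_iff.mpr one_pos
    _ ≤ Real.sinh R := by rcases eq_or_lt_of_le hR1 with h | h
                          · rw [h]
                          · exact (Real.sinh_lt_sinh.mpr h).le
  have hcR : Real.cosh R ≤ 2 * Real.sinh R := by
    have h1 : Real.cosh R - Real.sinh R = Real.exp (-R) := Real.cosh_sub_sinh R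
    have h2 : Real.exp (-R) ≤ 1 := Real.exp_le_one_iff.mpr (by linarith)
    linarith
  have hwcothR : wcoth R ≤ 2 * R := by
    rw [wcoth, if_neg (ne_of_gt hR0), div_le_iff₀ hsR]
    nlinarith
  have hwsinhR : wsinh R ≤ 1 := by
    rw [wsinh, if_neg (ne_of_gt hR0), div_le_one hsR]
    exact (Real.self_lt_sinh_iff.mpr hR0).le
  have hwsinhR0 : 0 < wsinh R := wsinh_pos hR0.le
  have hsqrtR : Real.sqrt (μ ^ 2 + wsinh R ^ 2) ≤ |μ| + 1 := by
    rw [show |μ| + 1 = Real.sqrt ((|μ| + 1) ^ 2) from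
      (Real.sqrt_sq (by positivity)).symm]
    apply Real.sqrt_le_sqrt
    nlinarith [sq_abs μ, hwsinhR, hwsinhR0, hμ0, mul_nonneg hμ0 hμ0]
  have hgR : 0 < gm σ μ R := by
    rw [gm]
    have h1 : 2 * σ * wcoth R ≤ 4 * σ * R := by nlinarith
    have h2 : 2 * σ * Real.sqrt (μ ^ 2 + wsinh R ^ 2) ≤ 2 * σ * (|μ| + 1) := by nlinarith
    have hμsq : μ ^ 2 = |μ| ^ 2 := (sq_abs μ).symm
    nlinarith
  -- IVT
  have hcont : ContinuousOn (gm σ μ) (Icc a R) := gm_continuousOn ha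
  have hiv := intermediate_value_Icc hRa.le hcont
  have h0mem : (0:ℝ) ∈ Icc (gm σ μ a) (gm σ μ R) := ⟨hga.le, hgR.le⟩
  obtain ⟨ω₁, hω₁mem, hω₁⟩ := hiv h0mem
  have hω₁0 : 0 ≤ ω₁ := le_trans ha.le hω₁mem.1
  obtain ⟨_, _, hμω⟩ := gm_zero_char hσ hω₁0 hω₁
  refine ⟨ω₁, ⟨hω₁0, hω₁, hμω⟩, ?_⟩
  intro ω hω hz
  rcases lt_trichotomy ω ω₁ with h | h | h
  · exact absurd (gm_no_two_zeros hσ hω h hz hω₁) (fun x => x)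
  · exact h
  · exact absurd (gm_no_two_zeros hσ hω₁0 h hω₁ hz) (fun x => x)
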